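/- Assume that P_t ≠ δ for every t = 1,…,T. Then the empirical sample complexity is asymptotically unbiased: lim_{N→∞} E[Ŝ^{(N)}] = S. -/

import Mathlib

open MeasureTheory ProbabilityTheory Filter

lemma sum_Icc_one_eq_sum_range (f : ℕ → ℝ) (N : ℕ) :
    ∑ i ∈ Finset.Icc 1 N, f i = ∑ i ∈ Finset.range N, f (i + 1) := by
  induction N with
  | zero => simp
  | succ n ih =>
    rw [Finset.sum_range_succ, ← ih, Finset.sum_Icc_succ_top (by omega)]

/-- **Asymptotic unbiasedness of the empirical sample complexity.**
With `P t = ℙ(V t 1 ≥ Vstar)`, `P̂ₜ⁽ᴺ⁾ = (1/N) ∑_{i=1}^N 𝟙[V t i ≥ Vstar]`,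
`S = ∑_{t=1}^T 𝟙[P t < δ]`, and `Ŝ⁽ᴺ⁾ = ∑_{t=1}^T 𝟙[P̂ₜ⁽ᴺ⁾ < δ]`, if `P t ≠ δ`
for all `t = 1,…,T`, then `E[Ŝ⁽ᴺ⁾] → S` as `N → ∞`. -/
theorem empirical_sample_complexity_asymptotically_unbiased
    {Ω : Type*} [MeasurableSpace Ω] (μ : Measure Ω) [IsProbabilityMeasure μ]
    (T : ℕ) (Vstar : ℝ) (δ : ℝ) (hδ : δ ∈ Set.Ioc (0 : ℝ) 1)
    (V : ℕ → ℕ → Ω → ℝ)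
    (hmeas : ∀ t i, Measurable (V t i))
    (hindep : ∀ t ∈ Finset.Icc 1 T,
      iIndepFun (V t) μ)
    (hident : ∀ t ∈ Finset.Icc 1 T, ∀ i j : ℕ, IdentDistrib (V t i) (V t j) μ μ)
    (P : ℕ → ℝ) (hP : ∀ t, P t = (μ {ω | Vstar ≤ V t 1 ω}).toReal)
    (Phat : ℕ → ℕ → Ω → ℝ)
    (hPhat : ∀ t N ω, Phat t N ω
      = (1 / (N : ℝ)) * ∑ i ∈ Finset.Icc 1 N, (if Vstar ≤ V t i ω then (1 : ℝ) else 0))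
    (S : ℝ) (hS : S = ∑ t ∈ Finset.Icc 1 T, (if P t < δ then (1 : ℝ) else 0))
    (Shat : ℕ → Ω → ℝ)
    (hShat : ∀ N ω, Shat N ω
      = ∑ t ∈ Finset.Icc 1 T, (if Phat t N ω < δ then (1 : ℝ) else 0))
    (hne : ∀ t ∈ Finset.Icc 1 T, P t ≠ δ) :
    Tendsto (fun N : ℕ => ∫ ω, Shat N ω ∂μ) atTop (nhds S) := by
  -- measurability of Phat
  have hPhatMeas : ∀ t N, Measurable (fun ω => Phat t N ω) := by
    intro t N
    have : (fun ω => Phat t N ω) = fun ω =>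
        (1 / (N : ℝ)) * ∑ i ∈ Finset.Icc 1 N, (if Vstar ≤ V t i ω then (1 : ℝ) else 0) := by
      funext ω; exact hPhat t N ω
    rw [this]
    exact (Finset.measurable_sum _ (fun i _ =>
      Measurable.ite (measurableSet_le measurable_const (hmeas t i))
        measurable_const measurable_const)).const_mul _
  have hFmeas : ∀ t N, Measurable (fun ω => if Phat t N ω < δ then (1 : ℝ) else 0) :=
    fun t N => Measurable.ite (measurableSet_lt (hPhatMeas t N) measurable_const)
      measurable_const measurable_const
  have hFint : ∀ t N, Integrable (fun ω => if Phat t N ω < δ then (1 : ℝ) else 0) μ := by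
    intro t N
    apply (integrable_const (1 : ℝ)).mono' (hFmeas t N).aestronglyMeasurable
    filter_upwards with ω
    by_cases h : Phat t N ω < δ <;> simp [h]
  -- swap integral and finite sum
  have hswap : ∀ N, ∫ ω, Shat N ω ∂μ
      = ∑ t ∈ Finset.Icc 1 T, ∫ ω, (if Phat t N ω < δ then (1 : ℝ) else 0) ∂μ := by
    intro N
    have : (fun ω => Shat N ω) = fun ω =>
        ∑ t ∈ Finset.Icc 1 T, (if Phat t N ω < δ then (1 : ℝ) else 0) := by
      funext ω; exact hShat N ω
    rw [this]
    exact integral_finset_sum _ (fun t _ => hFint t N)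
  simp only [hswap, hS]
  apply tendsto_finset_sum
  intro t ht
  -- per-term convergence
  set X : ℕ → Ω → ℝ := fun i ω => if Vstar ≤ V t (i + 1) ω then (1 : ℝ) else 0 with hX
  have hA : MeasurableSet {ω | Vstar ≤ V t 1 ω} :=
    measurableSet_le measurable_const (hmeas t 1)
  have hXind : X 0 = Set.indicator {ω | Vstar ≤ V t 1 ω} (fun _ => (1 : ℝ)) := by
    funext ω
    by_cases h : Vstar ≤ V t 1 ω <;> simp [hX, Set.indicator, h]
  have hXint : Integrable (X 0) μ := by
    rw [hXind]
    exact (integrable_const (1 : ℝ)).indicator hA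
  have hf : Measurable (fun x : ℝ => if Vstar ≤ x then (1 : ℝ) else 0) :=
    Measurable.ite (measurableSet_le measurable_const measurable_id)
      measurable_const measurable_const
  have hXcomp : ∀ i, X i = (fun x : ℝ => if Vstar ≤ x then (1 : ℝ) else 0) ∘ V t (i + 1) := by
    intro i; rfl
  have hXindep : Pairwise (Function.onFun (IndepFun · · μ) X) := by
    intro i j hij
    have := ((hindep t ht).indepFun (show i + 1 ≠ j + 1 by omega)).comp hf hf
    rw [Function.onFun, hXcomp i, hXcomp j]
    exact this
  have hXident : ∀ i, IdentDistrib (X i) (X 0) μ μ := by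
    intro i
    rw [hXcomp i, hXcomp 0]
    exact (hident t ht (i + 1) 1).comp hf
  have hmean : ∫ ω, X 0 ω ∂μ = P t := by
    rw [hXind, hP t]
    rw [integral_indicator_const (1 : ℝ) hA]
    simp [Measure.real]
  have hlln := strong_law_ae_real X hXint hXindep hXident
  rw [hmean] at hlln
  -- Phat t N ω = (∑ i ∈ range N, X i ω) / N
  have hPhatX : ∀ N ω, Phat t N ω = (∑ i ∈ Finset.range N, X i ω) / N := by
    intro N ω
    rw [hPhat t N ω, sum_Icc_one_eq_sum_range (fun i => if Vstar ≤ V t i ω then (1:ℝ) else 0) N]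
    simp [hX, div_eq_mul_inv, mul_comm]
  -- a.s. convergence of the indicator
  have hconv : ∀ᵐ ω ∂μ, Tendsto (fun N : ℕ => if Phat t N ω < δ then (1 : ℝ) else 0)
      atTop (nhds (if P t < δ then (1 : ℝ) else 0)) := by
    filter_upwards [hlln] with ω hω
    have hω' : Tendsto (fun N : ℕ => Phat t N ω) atTop (nhds (P t)) := by
      have : (fun N : ℕ => Phat t N ω) = fun N => (∑ i ∈ Finset.range N, X i ω) / N := by
        funext N; exact hPhatX N ω
      rw [this]; exact hω
    rcases lt_or_gt_of_ne (hne t ht) with h | h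
    · have hev : ∀ᶠ N in atTop, Phat t N ω < δ := hω'.eventually_lt_const h
      have : ∀ᶠ N in atTop, (if Phat t N ω < δ then (1 : ℝ) else 0) = 1 := by
        filter_upwards [hev] with N hN; simp [hN]
      rw [if_pos h]
      exact Tendsto.congr' (this.mono fun N hN => hN.symm) tendsto_const_nhds
    · have hev : ∀ᶠ N in atTop, δ < Phat t N ω := hω'.eventually_const_lt h
      have : ∀ᶠ N in atTop, (if Phat t N ω < δ then (1 : ℝ) else 0) = 0 := by
        filter_upwards [hev] with N hN
        simp [not_lt_of_gt hN, asymm hN]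
      rw [if_neg (not_lt_of_gt h)]
      exact Tendsto.congr' (this.mono fun N hN => hN.symm) tendsto_const_nhds
  -- dominated convergence
  have hconst : ∫ ω, (if P t < δ then (1 : ℝ) else 0) ∂μ = (if P t < δ then (1 : ℝ) else 0) := by
    rw [integral_const]; simp
  rw [← hconst]
  apply tendsto_integral_of_dominated_convergence (fun _ => (1 : ℝ))
    (fun N => (hFmeas t N).aestronglyMeasurable) (integrable_const 1)
  · intro N
    filter_upwards with ω
    by_cases h : Phat t N ω < δ <;> simp [h]
  · exact hconv
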